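/- Let α ∈ (0, 1/2), T > 0, η₀ ∈ ℝ, let b : ℝ → ℝ be Lipschitz and let ζ : [0,T] → ℝ be (1−α)-Hölder continuous. Then there exists a unique continuous function u : [0,T] → ℝ satisfying u_t = η₀ + ζ_t + ∫₀ᵗ b( u_s + max_{s' ∈ [0,s]} u_{s'}⁻ ) ds for all t ∈ [0,T], where u⁻ = max(0, −u). -/

import Mathlib

open MeasureTheory Set Filter Topology

noncomputable section

/-- `f` is `γ`-Hölder continuous on `[a,b]`. -/
def HolderOnIcc (γ a b : ℝ) (f : ℝ → ℝ) : Prop :=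
  ∃ C : ℝ, 0 ≤ C ∧ ∀ s ∈ Set.Icc a b, ∀ t ∈ Set.Icc a b, |f t - f s| ≤ C * |t - s| ^ γ

/-- The running maximum of the negative part of `u` on `[0, s]`. -/
def runNegMax (u : ℝ → ℝ) (s : ℝ) : ℝ :=
  sSup ((fun s' => max 0 (-u s')) '' Set.Icc 0 s)

lemma negMax_bddAbove {w : ℝ → ℝ} (hw : Continuous w) (s : ℝ) :
    BddAbove ((fun s' => max 0 (-w s')) '' Set.Icc 0 s) :=
  (isCompact_Icc.image (continuous_const.max hw.neg)).bddAbove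

lemma runNegMax_nonneg {w : ℝ → ℝ} (hw : Continuous w) {s : ℝ} (hs : 0 ≤ s) :
    0 ≤ runNegMax w s :=
  (le_max_left 0 (-w 0)).trans
    (le_csSup (negMax_bddAbove hw s) ⟨0, ⟨le_refl 0, hs⟩, rfl⟩)

lemma runNegMax_mono {w : ℝ → ℝ} (hw : Continuous w) : Monotone (runNegMax w) := by
  intro s t hst
  rcases le_or_gt 0 s with hs | hs
  · exact csSup_le_csSup (negMax_bddAbove hw t)
      ((Set.nonempty_Icc.mpr hs).image _)
      (Set.image_mono (Set.Icc_subset_Icc_right hst))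
  · rw [runNegMax, Set.Icc_eq_empty (not_le.mpr hs), Set.image_empty, Real.sSup_empty]
    rcases le_or_gt 0 t with ht | ht
    · exact runNegMax_nonneg hw ht
    · rw [runNegMax, Set.Icc_eq_empty (not_le.mpr ht), Set.image_empty, Real.sSup_empty]

lemma runNegMax_dist {w₁ w₂ : ℝ → ℝ} (hw₁ : Continuous w₁) (hw₂ : Continuous w₂)
    {s ε : ℝ} (hs : 0 ≤ s) (hε : 0 ≤ ε)
    (h : ∀ r ∈ Set.Icc 0 s, |w₁ r - w₂ r| ≤ ε) :
    |runNegMax w₁ s - runNegMax w₂ s| ≤ ε := by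
  have key : ∀ (a c : ℝ → ℝ), Continuous a → Continuous c →
      (∀ r ∈ Set.Icc 0 s, |a r - c r| ≤ ε) → runNegMax a s ≤ runNegMax c s + ε := by
    intro a c ha hc hac
    apply csSup_le ((Set.nonempty_Icc.mpr hs).image _)
    rintro x ⟨r, hr, rfl⟩
    have h2 : -a r ≤ -c r + ε := by
      have := abs_le.mp (hac r hr); linarith [this.1, this.2]
    have h0 : (0:ℝ) ≤ max 0 (-c r) + ε := add_nonneg (le_max_left _ _) hε
    have h1 : max 0 (-a r) ≤ max 0 (-c r) + ε :=
      max_le h0 (h2.trans (add_le_add_left (le_max_right _ _) ε))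
    refine h1.trans (add_le_add_left ?_ ε)
    exact le_csSup (negMax_bddAbove hc s) ⟨r, hr, rfl⟩
  have k1 := key w₁ w₂ hw₁ hw₂ h
  have k2 := key w₂ w₁ hw₂ hw₁ (fun r hr => by rw [abs_sub_comm]; exact h r hr)
  rw [abs_sub_le_iff]
  constructor <;> linarith

lemma lip_abs_bound {K : NNReal} {b : ℝ → ℝ} (hb : LipschitzWith K b) (x y : ℝ) :
    |b x - b y| ≤ (K : ℝ) * |x - y| := by
  have := hb.dist_le_mul x y
  rwa [Real.dist_eq, Real.dist_eq] at this

lemma integrand_integrableOn {T : ℝ} (hT : 0 ≤ T) {b : ℝ → ℝ} {K : NNReal}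
    (hb : LipschitzWith K b) {w : ℝ → ℝ} (hw : Continuous w) :
    IntegrableOn (fun s => b (w s + runNegMax w s)) (Set.Icc 0 T) := by
  have hMmeas : Measurable (runNegMax w) := (runNegMax_mono hw).measurable
  have hmeas : Measurable (fun s => b (w s + runNegMax w s)) :=
    hb.continuous.measurable.comp (hw.measurable.add hMmeas)
  obtain ⟨C₁, hC₁⟩ := isCompact_Icc.exists_bound_of_continuousOn (hw.continuousOn (s := Set.Icc 0 T))
  refine Measure.integrableOn_of_bounded measure_Icc_lt_top.ne hmeas.aestronglyMeasurable
    (M := |b 0| + (K : ℝ) * (C₁ + runNegMax w T)) ?_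
  refine ae_restrict_of_forall_mem measurableSet_Icc ?_
  intro s hs
  have hM0 : 0 ≤ runNegMax w s := runNegMax_nonneg hw hs.1
  have hMT : runNegMax w s ≤ runNegMax w T := runNegMax_mono hw hs.2
  have hws : |w s| ≤ C₁ := hC₁ s hs
  have h1 : |b (w s + runNegMax w s)| ≤ |b 0| + (K : ℝ) * |w s + runNegMax w s| := by
    have := lip_abs_bound hb (w s + runNegMax w s) 0
    have h3 : |b (w s + runNegMax w s)| ≤ |b (w s + runNegMax w s) - b 0| + |b 0| := by
      calc |b (w s + runNegMax w s)| = |(b (w s + runNegMax w s) - b 0) + b 0| := by ring_nf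
        _ ≤ |b (w s + runNegMax w s) - b 0| + |b 0| := abs_add_le _ _
    simp only [sub_zero] at this
    linarith
  have h2 : |w s + runNegMax w s| ≤ C₁ + runNegMax w T := by
    calc |w s + runNegMax w s| ≤ |w s| + |runNegMax w s| := abs_add_le _ _
      _ ≤ C₁ + runNegMax w T := by rw [abs_of_nonneg hM0]; exact add_le_add hws hMT
  have : (K : ℝ) * |w s + runNegMax w s| ≤ (K : ℝ) * (C₁ + runNegMax w T) :=
    mul_le_mul_of_nonneg_left h2 K.coe_nonneg
  simp only [Real.norm_eq_abs]
  linarith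

lemma step_est {T : ℝ} {b : ℝ → ℝ} {K : NNReal} (hb : LipschitzWith K b)
    {w₁ w₂ : ℝ → ℝ} (hw₁ : Continuous w₁) (hw₂ : Continuous w₂) (n : ℕ) {B : ℝ}
    (hB : 0 ≤ B)
    (hbd : ∀ s ∈ Set.Icc 0 T, |w₁ s - w₂ s| ≤ B * s ^ n / (n.factorial : ℝ)) :
    ∀ t ∈ Set.Icc 0 T,
      |(∫ s in (0:ℝ)..t, b (w₁ s + runNegMax w₁ s)) -
        ∫ s in (0:ℝ)..t, b (w₂ s + runNegMax w₂ s)| ≤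
      2 * (K : ℝ) * B * t ^ (n + 1) / ((n + 1).factorial : ℝ) := by
  intro t ht
  obtain ⟨ht0, htT⟩ := ht
  have hTnn : (0:ℝ) ≤ T := ht0.trans htT
  have hsub : Set.uIcc (0:ℝ) t ⊆ Set.Icc 0 T := by
    rw [Set.uIcc_of_le ht0]; exact Set.Icc_subset_Icc_right htT
  have i₁ : IntervalIntegrable (fun s => b (w₁ s + runNegMax w₁ s)) volume 0 t :=
    ((integrand_integrableOn hTnn hb hw₁).mono_set hsub).intervalIntegrable
  have i₂ : IntervalIntegrable (fun s => b (w₂ s + runNegMax w₂ s)) volume 0 t :=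
    ((integrand_integrableOn hTnn hb hw₂).mono_set hsub).intervalIntegrable
  rw [← intervalIntegral.integral_sub i₁ i₂]
  have hfact : (0:ℝ) < (n.factorial : ℝ) := by exact_mod_cast n.factorial_pos
  have hpt : ∀ s ∈ Set.Icc 0 t,
      |b (w₁ s + runNegMax w₁ s) - b (w₂ s + runNegMax w₂ s)| ≤
        2 * (K : ℝ) * B / (n.factorial : ℝ) * s ^ n := by
    intro s hs
    have hsT : s ∈ Set.Icc 0 T := ⟨hs.1, hs.2.trans htT⟩
    have hεnn : 0 ≤ B * s ^ n / (n.factorial : ℝ) :=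
      div_nonneg (mul_nonneg hB (pow_nonneg hs.1 n)) hfact.le
    have hM : |runNegMax w₁ s - runNegMax w₂ s| ≤ B * s ^ n / (n.factorial : ℝ) := by
      refine runNegMax_dist hw₁ hw₂ hs.1 hεnn ?_
      rintro r ⟨hr0, hrs⟩
      refine (hbd r ⟨hr0, hrs.trans hsT.2⟩).trans ?_
      gcongr
    have hwb := hbd s hsT
    have hd := lip_abs_bound hb (w₁ s + runNegMax w₁ s) (w₂ s + runNegMax w₂ s)
    have hsplit : |(w₁ s + runNegMax w₁ s) - (w₂ s + runNegMax w₂ s)| ≤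
        |w₁ s - w₂ s| + |runNegMax w₁ s - runNegMax w₂ s| := by
      have heq : (w₁ s + runNegMax w₁ s) - (w₂ s + runNegMax w₂ s) =
          (w₁ s - w₂ s) + (runNegMax w₁ s - runNegMax w₂ s) := by ring
      rw [heq]; exact abs_add_le _ _
    calc |b (w₁ s + runNegMax w₁ s) - b (w₂ s + runNegMax w₂ s)|
        ≤ (K : ℝ) * |(w₁ s + runNegMax w₁ s) - (w₂ s + runNegMax w₂ s)| := hd
      _ ≤ (K : ℝ) * (B * s ^ n / (n.factorial : ℝ) + B * s ^ n / (n.factorial : ℝ)) :=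
          mul_le_mul_of_nonneg_left (hsplit.trans (add_le_add hwb hM)) K.coe_nonneg
      _ = 2 * (K : ℝ) * B / (n.factorial : ℝ) * s ^ n := by field_simp; ring
  have ig : IntervalIntegrable (fun s => 2 * (K : ℝ) * B / (n.factorial : ℝ) * s ^ n)
      volume 0 t := Continuous.intervalIntegrable (by continuity) 0 t
  have hf1 : ((n.factorial : ℝ)) ≠ 0 := hfact.ne'
  have hf2 : ((n : ℝ) + 1) ≠ 0 := by positivity
  calc |∫ s in (0:ℝ)..t, (b (w₁ s + runNegMax w₁ s) - b (w₂ s + runNegMax w₂ s))|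
      ≤ ∫ s in (0:ℝ)..t, |b (w₁ s + runNegMax w₁ s) - b (w₂ s + runNegMax w₂ s)| :=
        intervalIntegral.abs_integral_le_integral_abs ht0
    _ ≤ ∫ s in (0:ℝ)..t, 2 * (K : ℝ) * B / (n.factorial : ℝ) * s ^ n :=
        intervalIntegral.integral_mono_on ht0 (i₁.sub i₂).abs ig hpt
    _ = 2 * (K : ℝ) * B / (n.factorial : ℝ) * ((t ^ (n + 1) - 0 ^ (n + 1)) / ((n:ℝ) + 1)) := by
        rw [intervalIntegral.integral_const_mul, integral_pow]
    _ = 2 * (K : ℝ) * B * t ^ (n + 1) / ((n + 1).factorial : ℝ) := by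
        rw [Nat.factorial_succ, zero_pow (Nat.succ_ne_zero n), sub_zero]
        push_cast
        rw [← div_div]
        ring
lemma HolderOnIcc.continuousOn {γ a c : ℝ} (hγ : 0 < γ) {f : ℝ → ℝ}
    (hf : HolderOnIcc γ a c f) : ContinuousOn f (Set.Icc a c) := by
  obtain ⟨C, hC0, hC⟩ := hf
  intro x hx
  have hg : Tendsto (fun t => C * |t - x| ^ γ) (𝓝[Set.Icc a c] x) (𝓝 0) := by
    have h4 : ContinuousAt (fun t : ℝ => |t - x|) x :=
      ((continuous_id.sub continuous_const).abs).continuousAt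
    have h1 : ContinuousAt (fun t : ℝ => C * |t - x| ^ γ) x :=
      continuousAt_const.mul (h4.rpow_const (Or.inr hγ.le))
    have h3 := h1.tendsto.mono_left (nhdsWithin_le_nhds (s := Set.Icc a c))
    simpa [Real.zero_rpow hγ.ne'] using h3
  rw [ContinuousWithinAt, tendsto_iff_dist_tendsto_zero]
  apply squeeze_zero' (Filter.Eventually.of_forall fun t => dist_nonneg) ?_ hg
  filter_upwards [self_mem_nhdsWithin] with t ht
  rw [Real.dist_eq]
  exact hC x hx t ht

/-- Existence and uniqueness for
`u t = η₀ + ζ t + ∫₀ᵗ b (u s + max_{s' ≤ s} u_{s'}⁻) ds`. -/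
theorem existence_uniqueness_running_max
    (α T η₀ : ℝ) (hα : α ∈ Set.Ioo (0 : ℝ) (1 / 2)) (hT : 0 < T)
    (b : ℝ → ℝ) (K : NNReal) (hb : LipschitzWith K b)
    (ζ : ℝ → ℝ) (hζ : HolderOnIcc (1 - α) 0 T ζ) :
    ∃ u : ℝ → ℝ, ContinuousOn u (Set.Icc 0 T) ∧
      (∀ t ∈ Set.Icc 0 T,
        u t = η₀ + ζ t + ∫ s in (0 : ℝ)..t, b (u s + runNegMax u s)) ∧
      (∀ u' : ℝ → ℝ, ContinuousOn u' (Set.Icc 0 T) →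
        (∀ t ∈ Set.Icc 0 T,
          u' t = η₀ + ζ t + ∫ s in (0 : ℝ)..t, b (u' s + runNegMax u' s)) →
        ∀ t ∈ Set.Icc 0 T, u' t = u t) := by
  have hγ : 0 < 1 - α := by have h1 := hα.1; have h2 := hα.2; linarith
  have hζc : ContinuousOn ζ (Set.Icc 0 T) := hζ.continuousOn hγ
  haveI : Nonempty C(Set.Icc (0:ℝ) T, ℝ) := ⟨ContinuousMap.const _ 0⟩
  set EE : C(Set.Icc (0:ℝ) T, ℝ) → ℝ → ℝ :=
    fun f t => f (Set.projIcc 0 T hT.le t) with hEEdef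
  have hEE : ∀ f : C(Set.Icc (0:ℝ) T, ℝ), Continuous (EE f) :=
    fun f => f.continuous.comp continuous_projIcc
  have hEEeq : ∀ f : C(Set.Icc (0:ℝ) T, ℝ), ∀ t, ∀ ht : t ∈ Set.Icc 0 T,
      EE f t = f ⟨t, ht⟩ := by
    intro f t ht
    simp [hEEdef, Set.projIcc_of_mem hT.le ht]
  set P : (ℝ → ℝ) → ℝ → ℝ :=
    fun w t => η₀ + ζ t + ∫ s in (0:ℝ)..t, b (w s + runNegMax w s) with hPdef
  have hPcont : ∀ w : ℝ → ℝ, Continuous w → ContinuousOn (P w) (Set.Icc 0 T) := by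
    intro w hw
    have hint := integrand_integrableOn hT.le hb hw
    have h1 : ContinuousOn (fun x => ∫ s in Set.Ioc 0 x, b (w s + runNegMax w s))
        (Set.Icc 0 T) := intervalIntegral.continuousOn_primitive hint
    have h2 : ContinuousOn (fun x => ∫ s in (0:ℝ)..x, b (w s + runNegMax w s))
        (Set.Icc 0 T) := by
      apply h1.congr
      intro x hx
      exact intervalIntegral.integral_of_le hx.1
    exact (continuousOn_const.add hζc).add h2
  set Φ : C(Set.Icc (0:ℝ) T, ℝ) → C(Set.Icc (0:ℝ) T, ℝ) :=
    fun f => ⟨fun t => P (EE f) t.1, (hPcont (EE f) (hEE f)).restrict⟩ with hΦdef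
  have hΦapp : ∀ f : C(Set.Icc (0:ℝ) T, ℝ), ∀ t : Set.Icc (0:ℝ) T,
      Φ f t = P (EE f) t.1 := fun _ _ => rfl
  -- key iterate estimate
  have key : ∀ n : ℕ, ∀ f g : C(Set.Icc (0:ℝ) T, ℝ), ∀ t : Set.Icc (0:ℝ) T,
      |Φ^[n] f t - Φ^[n] g t| ≤
        dist f g * ((2 * (K:ℝ))^n * t.1 ^ n / (n.factorial : ℝ)) := by
    intro n
    induction n with
    | zero =>
      intro f g t
      simpa [Real.dist_eq] using ContinuousMap.dist_apply_le_dist (f := f) (g := g) t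
    | succ n ih =>
      intro f g t
      rw [Function.iterate_succ_apply', Function.iterate_succ_apply']
      set f' := Φ^[n] f with hf'
      set g' := Φ^[n] g with hg'
      have hbd : ∀ s ∈ Set.Icc (0:ℝ) T, |EE f' s - EE g' s| ≤
          (dist f g * (2 * (K:ℝ))^n) * s ^ n / (n.factorial : ℝ) := by
        intro s hs
        rw [hEEeq f' s hs, hEEeq g' s hs]
        refine (ih f g ⟨s, hs⟩).trans (le_of_eq ?_)
        ring
      have hB : 0 ≤ dist f g * (2 * (K:ℝ))^n :=
        mul_nonneg dist_nonneg (pow_nonneg (by positivity) n)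
      have hstep := step_est hb (hEE f') (hEE g') n hB hbd t.1 t.2
      have hdiff : Φ f' t - Φ g' t =
          (∫ s in (0:ℝ)..t.1, b (EE f' s + runNegMax (EE f') s)) -
          ∫ s in (0:ℝ)..t.1, b (EE g' s + runNegMax (EE g') s) := by
        rw [hΦapp f' t, hΦapp g' t]
        show (η₀ + ζ t.1 + _) - (η₀ + ζ t.1 + _) = _
        ring
      rw [hdiff]
      refine hstep.trans (le_of_eq ?_)
      ring
  have hLip : ∀ n : ℕ, ∀ f g : C(Set.Icc (0:ℝ) T, ℝ),
      dist (Φ^[n] f) (Φ^[n] g) ≤ ((2 * (K:ℝ) * T)^n / (n.factorial : ℝ)) * dist f g := by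
    intro n f g
    have hKT : (0:ℝ) ≤ 2 * (K:ℝ) * T := by positivity
    have hc : 0 ≤ ((2 * (K:ℝ) * T)^n / (n.factorial : ℝ)) * dist f g := by positivity
    rw [ContinuousMap.dist_le hc]
    intro t
    rw [Real.dist_eq]
    refine (key n f g t).trans ?_
    have h1 : t.1 ^ n ≤ T ^ n := pow_le_pow_left₀ t.2.1 t.2.2 n
    have h2 : dist f g * ((2 * (K:ℝ))^n * t.1 ^ n / (n.factorial : ℝ)) ≤
        dist f g * ((2 * (K:ℝ))^n * T ^ n / (n.factorial : ℝ)) := by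
      gcongr
    refine h2.trans (le_of_eq ?_)
    rw [mul_pow]
    ring
  obtain ⟨n, hn⟩ : ∃ n : ℕ, (2 * (K:ℝ) * T)^n / (n.factorial : ℝ) < 1 :=
    ((FloorSemiring.tendsto_pow_div_factorial_atTop
      (2 * (K:ℝ) * T)).eventually_lt_const one_pos).exists
  have hcnn : (0:ℝ) ≤ (2 * (K:ℝ) * T)^n / (n.factorial : ℝ) := by positivity
  set c : NNReal := Real.toNNReal ((2 * (K:ℝ) * T)^n / (n.factorial : ℝ)) with hcdef
  have hcoe : (c : ℝ) = (2 * (K:ℝ) * T)^n / (n.factorial : ℝ) := Real.coe_toNNReal _ hcnn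
  have hcontr : ContractingWith c (Φ^[n]) := by
    constructor
    · rw [← NNReal.coe_lt_coe, hcoe, NNReal.coe_one]
      exact hn
    · exact LipschitzWith.of_dist_le_mul (fun f g => by rw [hcoe]; exact hLip n f g)
  set x := hcontr.fixedPoint (Φ^[n]) with hxdef
  have hxfix : Function.IsFixedPt (Φ^[n]) x := hcontr.fixedPoint_isFixedPt
  have hΦx : Φ x = x := by
    have h1 : Function.IsFixedPt (Φ^[n]) (Φ x) := by
      show Φ^[n] (Φ x) = Φ x
      calc Φ^[n] (Φ x) = Φ (Φ^[n] x) := by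
            rw [← Function.iterate_succ_apply, Function.iterate_succ_apply']
        _ = Φ x := by rw [hxfix]
    exact (hcontr.fixedPoint_unique h1).trans (hcontr.fixedPoint_unique hxfix).symm
  refine ⟨EE x, (hEE x).continuousOn, ?_, ?_⟩
  · intro t ht
    calc EE x t = x ⟨t, ht⟩ := hEEeq x t ht
      _ = Φ x ⟨t, ht⟩ := by rw [hΦx]
      _ = P (EE x) t := hΦapp x ⟨t, ht⟩
      _ = η₀ + ζ t + ∫ s in (0:ℝ)..t, b (EE x s + runNegMax (EE x) s) := rfl
  · intro u' hu' hequ t ht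
    set f' : C(Set.Icc (0:ℝ) T, ℝ) := ⟨fun t => u' t.1, hu'.restrict⟩ with hf'def
    have hEq : ∀ r ∈ Set.Icc (0:ℝ) T, EE f' r = u' r := by
      intro r hr
      rw [hEEeq f' r hr]
      rfl
    have hf'fix : Φ f' = f' := by
      ext s
      rw [hΦapp f' s]
      have hM : ∀ r ∈ Set.Icc (0:ℝ) T, runNegMax (EE f') r = runNegMax u' r := by
        intro r hr
        simp only [runNegMax]
        congr 1
        apply Set.image_congr
        intro q hq
        rw [hEq q ⟨hq.1, hq.2.trans hr.2⟩]
      have hint : (∫ s' in (0:ℝ)..s.1, b (EE f' s' + runNegMax (EE f') s')) =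
          ∫ s' in (0:ℝ)..s.1, b (u' s' + runNegMax u' s') := by
        apply intervalIntegral.integral_congr
        intro q hq
        rw [Set.uIcc_of_le s.2.1] at hq
        have hq' : q ∈ Set.Icc (0:ℝ) T := ⟨hq.1, hq.2.trans s.2.2⟩
        show b (EE f' q + runNegMax (EE f') q) = b (u' q + runNegMax u' q)
        rw [hEq q hq', hM q hq']
      show η₀ + ζ s.1 + (∫ s' in (0:ℝ)..s.1, b (EE f' s' + runNegMax (EE f') s')) = u' s.1
      rw [hint]
      exact (hequ s.1 s.2).symm
    have h2 : Function.IsFixedPt (Φ^[n]) f' := Function.IsFixedPt.iterate hf'fix n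
    have h3 : f' = x :=
      (hcontr.fixedPoint_unique h2).trans (hcontr.fixedPoint_unique hxfix).symm
    calc u' t = f' ⟨t, ht⟩ := rfl
      _ = x ⟨t, ht⟩ := by rw [h3]
      _ = EE x t := (hEEeq x t ht).symm
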